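/- For v in the open unit ball of ℝⁿ, the determinant of the Lorentz boost B(v) equals 1. -/

import Mathlib

open scoped RealInnerProductSpace

noncomputable def gam {n : ℕ} (v : EuclideanSpace ℝ (Fin n)) : ℝ :=
  1 / Real.sqrt (1 - ‖v‖ ^ 2)

noncomputable def eAdd {n : ℕ} (u v : EuclideanSpace ℝ (Fin n)) :
    EuclideanSpace ℝ (Fin n) :=
  (1 / (1 + ⟪u, v⟫)) •
    (u + (1 / gam u) • v + ((gam u / (1 + gam u)) * ⟪u, v⟫) • u)

noncomputable def boost {n : ℕ} (v : EuclideanSpace ℝ (Fin n)) :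
    Matrix (Unit ⊕ Fin n) (Unit ⊕ Fin n) ℝ :=
  Matrix.fromBlocks
    (Matrix.of fun _ _ => gam v)
    (Matrix.of fun _ j => gam v * v j)
    (Matrix.of fun i _ => gam v * v i)
    (1 + Matrix.of fun i j => (gam v) ^ 2 / (1 + gam v) * v i * v j)

theorem boost_det {n : ℕ} (v : EuclideanSpace ℝ (Fin n)) (hv : ‖v‖ < 1) :
    (boost v).det = 1 := by
  have hs : (0:ℝ) < 1 - ‖v‖ ^ 2 := by nlinarith [norm_nonneg v]
  have hgpos : 0 < gam v := by rw [gam]; positivity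
  have hg2 : (gam v) ^ 2 * (1 - ‖v‖ ^ 2) = 1 := by
    rw [gam, div_pow, one_pow, Real.sq_sqrt hs.le]
    field_simp
  have hsum : ∑ i, v i * v i = ‖v‖ ^ 2 := by
    have := real_inner_self_eq_norm_sq v
    rw [PiLp.inner_apply] at this
    simpa [pow_two] using this
  have h1g : (0:ℝ) < 1 + gam v := by linarith
  have hA : Invertible (Matrix.of (fun _ _ => gam v) : Matrix Unit Unit ℝ) := by
    apply invertibleOfLeftInverse _ (Matrix.of (fun _ _ => 1/gam v))
    ext i j
    simp [Matrix.mul_apply, Matrix.one_apply, Subsingleton.elim i j,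
      div_mul_cancel₀, hgpos.ne']
  rw [boost, Matrix.det_fromBlocks₁₁]
  have hinv : (⅟ (Matrix.of (fun _ _ => gam v) : Matrix Unit Unit ℝ)) =
      Matrix.of (fun _ _ => 1/gam v) := by
    apply invOf_eq_right_inv
    ext i j
    simp [Matrix.mul_apply, Matrix.one_apply, Subsingleton.elim i j,
      mul_div_cancel₀, hgpos.ne']
  rw [hinv]
  have hschur :
      (1 + Matrix.of fun i j => (gam v) ^ 2 / (1 + gam v) * v i * v j) -
        (Matrix.of (fun i _ => gam v * v i) : Matrix (Fin n) Unit ℝ) *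
          (Matrix.of (fun _ _ => (1:ℝ)/gam v) : Matrix Unit Unit ℝ) *
          (Matrix.of (fun _ j => gam v * v j) : Matrix Unit (Fin n) ℝ)
      = 1 + Matrix.replicateCol Unit (fun i => ((gam v) ^ 2 / (1 + gam v) - gam v) * v i) *
            Matrix.replicateRow Unit (fun j => v j) := by
    ext i j
    simp only [Matrix.sub_apply, Matrix.add_apply, Matrix.mul_apply, Matrix.of_apply,
      Matrix.replicateCol_apply, Matrix.replicateRow_apply, Finset.univ_unique, Finset.sum_singleton]
    field_simp
    ring
  rw [hschur, Matrix.det_one_add_replicateCol_mul_replicateRow, Matrix.det_unique]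
  have hdot : dotProduct (fun j => v j)
      (fun i => ((gam v) ^ 2 / (1 + gam v) - gam v) * v i)
      = ((gam v) ^ 2 / (1 + gam v) - gam v) * ‖v‖ ^ 2 := by
    simp only [dotProduct, ← hsum, Finset.mul_sum]
    exact Finset.sum_congr rfl fun i _ => by ring
  rw [hdot]
  simp only [Matrix.of_apply]
  field_simp
  nlinarith [hg2, hgpos, h1g]
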